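/- arXiv:2207.03106 — 4 statements merged into one kernel-verified Lean document; each statement's English description precedes it below -/
import Mathlib

section
/- Let A be a real symmetric positive definite d×d matrix, B a real symmetric positive semidefinite d×d matrix, and α > 0. If det(A + B) ≤ (1 + α)·det(A), then B ⪯ α·A, i.e., for every x ∈ ℝ^d, xᵀBx ≤ α·xᵀAx. -/
open Matrix

/-- If `det (A + B) ≤ (1 + α) det A` for positive definite `A` and positive
semidefinite `B`, then `B ⪯ α • A`, i.e. `xᵀ B x ≤ α * xᵀ A x` for all `x`. -/
theorem loewner_of_det_le {d : ℕ}
    (A B : Matrix (Fin d) (Fin d) ℝ) (α : ℝ)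
    (hA : A.PosDef) (hB : B.PosSemidef) (hα : 0 < α)
    (hdet : (A + B).det ≤ (1 + α) * A.det) :
    ∀ x : Fin d → ℝ, x ⬝ᵥ B *ᵥ x ≤ α * (x ⬝ᵥ A *ᵥ x) := by
  classical
  open scoped MatrixOrder in
  set C := CFC.sqrt A with hC
  open scoped MatrixOrder in
  have hCC : C * C = A := CFC.sqrt_mul_sqrt_self A hA.posSemidef.nonneg
  open scoped MatrixOrder in
  have hCsym : C.IsHermitian := (CFC.sqrt_nonneg A).posSemidef.isHermitian
  have hdetA : 0 < A.det := hA.det_pos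
  have hCdet : IsUnit C.det := by
    have : C.det * C.det = A.det := by rw [← det_mul, hCC]
    exact isUnit_iff_ne_zero.2 (fun h => by simp [h] at this; exact hdetA.ne' this.symm)
  have hCinv : C * C⁻¹ = 1 := mul_nonsing_inv _ hCdet
  have hCinv' : C⁻¹ * C = 1 := nonsing_inv_mul _ hCdet
  set M := C⁻¹ * B * C⁻¹ with hMdef
  have hM : M.PosSemidef := by
    have := hB.conjTranspose_mul_mul_same C⁻¹
    rwa [hCsym.inv.eq] at this
  have hBM : B = C * M * C := by
    simp only [hMdef, Matrix.mul_assoc, hCinv', Matrix.mul_one]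
    rw [← Matrix.mul_assoc, hCinv, Matrix.one_mul]
  -- determinant computation
  have hAB : A + B = C * (1 + M) * C := by
    rw [Matrix.mul_add, Matrix.add_mul, Matrix.mul_one, ← hBM, hCC]
  have hdet1 : A.det * (1 + M).det = (A + B).det := by
    rw [hAB, det_mul, det_mul, ← hCC, det_mul]; ring
  have hdetM : (1 + M).det ≤ 1 + α := by
    have := hdet
    rw [← hdet1] at this
    exact le_of_mul_le_mul_left (by rwa [mul_comm (1+α)] at this) hdetA
  -- spectral decomposition of M
  set U : Matrix (Fin d) (Fin d) ℝ := (hM.1.eigenvectorUnitary : Matrix (Fin d) (Fin d) ℝ) with hU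
  set μ := hM.1.eigenvalues with hμ
  have hUU : U * star U = 1 := hU ▸ (Matrix.mem_unitaryGroup_iff).mp hM.1.eigenvectorUnitary.2
  have hspec : M = U * diagonal μ * star U := by
    have := hM.1.spectral_theorem
    simpa using this
  have hμ0 : ∀ i, 0 ≤ μ i := hM.eigenvalues_nonneg
  have honeM : (1 : Matrix (Fin d) (Fin d) ℝ) + M = U * diagonal (fun i => 1 + μ i) * star U := by
    have h1 : (1 : Matrix (Fin d) (Fin d) ℝ) = U * 1 * star U := by
      rw [Matrix.mul_one, hUU]
    calc (1 : Matrix (Fin d) (Fin d) ℝ) + M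
        = U * 1 * star U + U * diagonal μ * star U := by rw [← h1, ← hspec]
      _ = U * (1 + diagonal μ) * star U := by
          rw [Matrix.mul_add, Matrix.add_mul]
      _ = U * diagonal (fun i => 1 + μ i) * star U := by
          rw [← diagonal_one, diagonal_add]
  have hdetprod : (1 + M).det = ∏ i, (1 + μ i) := by
    rw [honeM, det_mul_right_comm, hUU, Matrix.one_mul, det_diagonal]
  have hμle : ∀ j, μ j ≤ α := by
    intro j
    have herase : (1:ℝ) ≤ ∏ i ∈ Finset.univ.erase j, (1 + μ i) := by
      calc (1:ℝ) = ∏ _i ∈ Finset.univ.erase j, (1:ℝ) := by simp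
        _ ≤ ∏ i ∈ Finset.univ.erase j, (1 + μ i) :=
            Finset.prod_le_prod (fun i _ => zero_le_one) (fun i _ => by nlinarith [hμ0 i])
    have hsplit : (1 + μ j) * ∏ i ∈ Finset.univ.erase j, (1 + μ i) = ∏ i, (1 + μ i) :=
      Finset.mul_prod_erase Finset.univ (fun i => 1 + μ i) (Finset.mem_univ j)
    have h1 : 1 + μ j ≤ ∏ i, (1 + μ i) := by
      rw [← hsplit]
      nlinarith [hμ0 j]
    nlinarith [hdetM, hdetprod ▸ h1]
  -- α • 1 - M is PSD
  have hPSD : (α • (1 : Matrix (Fin d) (Fin d) ℝ) - M).PosSemidef := by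
    have heq : α • (1 : Matrix (Fin d) (Fin d) ℝ) - M
        = U * diagonal (fun i => α - μ i) * star U := by
      have h1 : α • (1 : Matrix (Fin d) (Fin d) ℝ) = U * (α • 1) * star U := by
        rw [Matrix.mul_smul, Matrix.smul_mul, Matrix.mul_one, hUU]
      calc α • (1 : Matrix (Fin d) (Fin d) ℝ) - M
          = U * (α • 1) * star U - U * diagonal μ * star U := by rw [← h1, ← hspec]
        _ = U * (α • 1 - diagonal μ) * star U := by
            rw [Matrix.mul_sub, Matrix.sub_mul]
        _ = U * diagonal (fun i => α - μ i) * star U := by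
            have hd : α • (1 : Matrix (Fin d) (Fin d) ℝ) - diagonal μ
                = diagonal (fun i => α - μ i) := by
              ext i j
              by_cases h : i = j <;> simp [Matrix.one_apply, diagonal_apply, h]
            rw [hd]
    rw [heq]
    exact (posSemidef_diagonal_iff.mpr fun i => by simp [sub_nonneg, hμle i]).mul_mul_conjTranspose_same U
  -- conclude
  intro x
  set y := C *ᵥ x with hy
  have hkey := hPSD.dotProduct_mulVec_nonneg y
  have hstar : star y = y := rfl
  rw [hstar, sub_mulVec, dotProduct_sub, smul_mulVec, one_mulVec, dotProduct_smul,
    sub_nonneg] at hkey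
  have hCt : Cᵀ = C := by
    ext i j
    have := congrFun (congrFun hCsym i) j
    simpa [conjTranspose_apply] using this
  have hvm : x ᵥ* C = y := by rw [← hCt, vecMul_transpose]
  have h1 : x ⬝ᵥ B *ᵥ x = y ⬝ᵥ M *ᵥ y := by
    conv_lhs => rw [hBM, Matrix.mul_assoc, ← mulVec_mulVec, dotProduct_mulVec, hvm,
      ← mulVec_mulVec, ← hy]
  have h2 : x ⬝ᵥ A *ᵥ x = y ⬝ᵥ y := by
    conv_lhs => rw [← hCC, ← mulVec_mulVec, dotProduct_mulVec, hvm, ← hy]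
  calc x ⬝ᵥ B *ᵥ x = y ⬝ᵥ M *ᵥ y := h1
    _ ≤ α * (y ⬝ᵥ y) := by simpa using hkey
    _ = α * (x ⬝ᵥ A *ᵥ x) := by rw [h2]
end

section
/- For any real symmetric positive semidefinite d×d matrices A, B, and C, it holds that det(A + B + C) + det(A) ≥ det(A + B) + det(A + C). -/
open Matrix

open scoped MatrixOrder in
noncomputable def Matrix.PosSemidef.sqrt {d : ℕ} {C : Matrix (Fin d) (Fin d) ℝ} (_hC : C.PosSemidef) :
    Matrix (Fin d) (Fin d) ℝ := CFC.sqrt C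

open scoped MatrixOrder in
lemma Matrix.PosSemidef.sqrt_mul_self {d : ℕ} {C : Matrix (Fin d) (Fin d) ℝ} (hC : C.PosSemidef) :
    hC.sqrt * hC.sqrt = C := CFC.sqrt_mul_sqrt_self C hC.nonneg

open scoped MatrixOrder in
lemma Matrix.PosSemidef.posSemidef_sqrt {d : ℕ} {C : Matrix (Fin d) (Fin d) ℝ} (hC : C.PosSemidef) :
    hC.sqrt.PosSemidef := (CFC.sqrt_nonneg C).posSemidef

section Aux

variable {d : ℕ}

private lemma psd_dot_nonneg {P : Matrix (Fin d) (Fin d) ℝ} (hP : P.PosSemidef) (x : Fin d → ℝ) :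
    0 ≤ x ⬝ᵥ P *ᵥ x := by simpa using hP.dotProduct_mulVec_nonneg x

private lemma sym_dot_comm {P : Matrix (Fin d) (Fin d) ℝ} (hP : P.IsHermitian) (x y : Fin d → ℝ) :
    x ⬝ᵥ P *ᵥ y = y ⬝ᵥ P *ᵥ x := by
  have hPt : Pᵀ = P := by
    have := hP.eq
    simpa [Matrix.conjTranspose_eq_transpose_of_trivial] using this
  rw [dotProduct_mulVec, ← mulVec_transpose, hPt, dotProduct_comm]

private lemma psd_cauchy {P : Matrix (Fin d) (Fin d) ℝ} (hP : P.PosSemidef) (u v : Fin d → ℝ) :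
    (u ⬝ᵥ P *ᵥ v) * (v ⬝ᵥ P *ᵥ u) ≤ (u ⬝ᵥ P *ᵥ u) * (v ⬝ᵥ P *ᵥ v) := by
  have key : ∀ t : ℝ, 0 ≤ (v ⬝ᵥ P *ᵥ v) * (t * t) + (2 * (u ⬝ᵥ P *ᵥ v)) * t + u ⬝ᵥ P *ᵥ u := by
    intro t
    have h := psd_dot_nonneg hP (u + t • v)
    have expand : (u + t • v) ⬝ᵥ P *ᵥ (u + t • v)
        = u ⬝ᵥ P *ᵥ u + t * (u ⬝ᵥ P *ᵥ v) + t * (v ⬝ᵥ P *ᵥ u) + t * t * (v ⬝ᵥ P *ᵥ v) := by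
      simp [mulVec_add, mulVec_smul, dotProduct_add, add_dotProduct, smul_dotProduct,
        dotProduct_smul, smul_eq_mul]
      ring
    rw [expand, sym_dot_comm hP.1 v u] at h
    nlinarith [h]
  have hd := discrim_le_zero key
  rw [discrim] at hd
  rw [sym_dot_comm hP.1 v u]
  nlinarith [hd]

private lemma vecMulVec_psd (u : Fin d → ℝ) : (vecMulVec u u).PosSemidef := by
  refine Matrix.PosSemidef.of_dotProduct_mulVec_nonneg ?_ ?_
  · ext i j
    simp [vecMulVec_apply, conjTranspose_apply, mul_comm]
  · intro x
    have h : vecMulVec u u *ᵥ x = (u ⬝ᵥ x) • u := by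
      ext i
      simp only [vecMulVec_apply, mulVec, dotProduct, Pi.smul_apply, smul_eq_mul]
      rw [Finset.sum_mul]
      exact Finset.sum_congr rfl fun _ _ => by ring
    rw [h]
    simp only [dotProduct_smul, smul_eq_mul, star_trivial]
    rw [dotProduct_comm]
    exact mul_self_nonneg _

private lemma det_rank1 (Y : Matrix (Fin d) (Fin d) ℝ) (hY : IsUnit Y.det) (u v : Fin d → ℝ) :
    (Y + vecMulVec u v).det = Y.det * (1 + v ⬝ᵥ Y⁻¹ *ᵥ u) := by
  rw [vecMulVec_eq (Fin 1), det_add_replicateCol_mul_replicateRow hY]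
  congr 1
  simp [det_fin_one_of, Matrix.mul_apply, dotProduct, mulVec, Finset.mul_sum, Finset.sum_mul]
  rw [Finset.sum_comm]
  exact Finset.sum_congr rfl fun i _ => Finset.sum_congr rfl fun j _ => by ring

private lemma det_rank2 (Y : Matrix (Fin d) (Fin d) ℝ) (hY : IsUnit Y.det) (u v : Fin d → ℝ) :
    (Y + (vecMulVec u u + vecMulVec v v)).det =
      Y.det * ((1 + u ⬝ᵥ Y⁻¹ *ᵥ u) * (1 + v ⬝ᵥ Y⁻¹ *ᵥ v)
        - (u ⬝ᵥ Y⁻¹ *ᵥ v) * (v ⬝ᵥ Y⁻¹ *ᵥ u)) := by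
  set w : Fin 2 → Fin d → ℝ := ![u, v] with hw
  set U : Matrix (Fin d) (Fin 2) ℝ := Matrix.of fun i k => w k i with hU
  set V : Matrix (Fin 2) (Fin d) ℝ := Matrix.of fun k i => w k i with hV
  have hUV : U * V = vecMulVec u u + vecMulVec v v := by
    ext i j
    simp [Matrix.mul_apply, Fin.sum_univ_two, hU, hV, hw, vecMulVec_apply]
  have e : ∀ k l : Fin 2, (V * Y⁻¹ * U) k l = w k ⬝ᵥ Y⁻¹ *ᵥ w l := by
    intro k l
    simp [Matrix.mul_apply, dotProduct, mulVec, hU, hV, Finset.mul_sum, Finset.sum_mul]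
    rw [Finset.sum_comm]
    exact Finset.sum_congr rfl fun i _ => Finset.sum_congr rfl fun j _ => by ring
  rw [← hUV, det_add_mul U V hY]
  congr 1
  rw [det_fin_two]
  simp only [Matrix.add_apply, Matrix.one_apply, e, hw]
  norm_num

/-- The core case: `Y` positive definite and two rank-one perturbations. -/
private lemma core (Y : Matrix (Fin d) (Fin d) ℝ) (hY : Y.PosDef) (u v : Fin d → ℝ) :
    (Y + vecMulVec u u).det + (Y + vecMulVec v v).det
      ≤ (Y + (vecMulVec u u + vecMulVec v v)).det + Y.det := by
  have hYu : IsUnit Y.det := hY.det_pos.ne'.isUnit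
  have hinv : (Y⁻¹).PosSemidef := hY.inv.posSemidef
  rw [det_rank1 Y hYu u u, det_rank1 Y hYu v v, det_rank2 Y hYu u v]
  have hcs := psd_cauchy hinv u v
  have hdet := hY.det_pos
  nlinarith [mul_le_mul_of_nonneg_left hcs hdet.le]

/-- Rank-one `u uᵀ` versus a sum of rank-ones, positive definite base. -/
private lemma right_ind {m : ℕ} (w : Fin m → Fin d → ℝ) (s : Finset (Fin m)) :
    ∀ Y : Matrix (Fin d) (Fin d) ℝ, Y.PosDef → ∀ u : Fin d → ℝ,
      (Y + vecMulVec u u).det + (Y + ∑ i ∈ s, vecMulVec (w i) (w i)).det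
        ≤ (Y + vecMulVec u u + ∑ i ∈ s, vecMulVec (w i) (w i)).det + Y.det := by
  induction s using Finset.induction with
  | empty => intro Y hY u; simp
  | @insert j s hj ih =>
    intro Y hY u
    rw [Finset.sum_insert hj]
    set a := vecMulVec (w j) (w j) with ha
    set Cs := ∑ i ∈ s, vecMulVec (w i) (w i) with hCs
    have hY' : (Y + a).PosDef := hY.add_posSemidef (vecMulVec_psd (w j))
    have h1 := ih (Y + a) hY' u
    have h2 := core Y hY u (w j)
    rw [← ha] at h2
    have e1 : Y + (a + Cs) = Y + a + Cs := by abel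
    have e2 : Y + vecMulVec u u + (a + Cs) = Y + vecMulVec u u + a + Cs := by abel
    have e3 : Y + (vecMulVec u u + a) = Y + vecMulVec u u + a := by abel
    have e4 : Y + a + vecMulVec u u + Cs = Y + vecMulVec u u + a + Cs := by abel
    have e5 : Y + a + vecMulVec u u = Y + vecMulVec u u + a := by abel
    rw [e1, e2]
    rw [e3] at h2
    rw [e4, e5] at h1
    linarith

/-- Every positive semidefinite matrix is a sum of rank-one `w wᵀ` terms. -/
private lemma psd_sum_rank1 {C : Matrix (Fin d) (Fin d) ℝ} (hC : C.PosSemidef) :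
    C = ∑ i : Fin d, vecMulVec (fun j => hC.sqrt i j) (fun j => hC.sqrt i j) := by
  have hS : hC.sqrt * hC.sqrt = C := hC.sqrt_mul_self
  have hsym : (hC.sqrt)ᵀ = hC.sqrt := by
    have := hC.posSemidef_sqrt.1.eq
    simpa [Matrix.conjTranspose_eq_transpose_of_trivial] using this
  ext j k
  conv_lhs => rw [← hS]
  simp only [Matrix.mul_apply, Matrix.sum_apply, vecMulVec_apply]
  exact Finset.sum_congr rfl fun i _ => by
    have h2 : hC.sqrt j i = hC.sqrt i j := congrFun (congrFun hsym i) j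
    rw [h2]

/-- Rank-one versus arbitrary PSD `C`, positive definite base. -/
private lemma lemB (Y : Matrix (Fin d) (Fin d) ℝ) (hY : Y.PosDef) (u : Fin d → ℝ)
    {C : Matrix (Fin d) (Fin d) ℝ} (hC : C.PosSemidef) :
    (Y + vecMulVec u u).det + (Y + C).det ≤ (Y + vecMulVec u u + C).det + Y.det := by
  have h := right_ind (fun i => fun j => hC.sqrt i j) Finset.univ Y hY u
  rw [← psd_sum_rank1 hC] at h
  exact h

/-- The main inequality for positive definite `A`. -/
private lemma lemC {m : ℕ} (w : Fin m → Fin d → ℝ) (s : Finset (Fin m)) :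
    ∀ A : Matrix (Fin d) (Fin d) ℝ, A.PosDef →
      ∀ C : Matrix (Fin d) (Fin d) ℝ, C.PosSemidef →
      (A + ∑ i ∈ s, vecMulVec (w i) (w i)).det + (A + C).det
        ≤ (A + ∑ i ∈ s, vecMulVec (w i) (w i) + C).det + A.det := by
  induction s using Finset.induction with
  | empty =>
    intro A hA C hC
    simp only [Finset.sum_empty, add_zero]
    linarith
  | @insert j s hj ih =>
    intro A hA C hC
    rw [Finset.sum_insert hj]
    set a := vecMulVec (w j) (w j) with ha
    set Bs := ∑ i ∈ s, vecMulVec (w i) (w i) with hBs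
    have hA' : (A + a).PosDef := hA.add_posSemidef (vecMulVec_psd (w j))
    have h1 := ih (A + a) hA' C hC
    have h2 := lemB A hA (w j) hC
    rw [← ha] at h2
    have e1 : A + (a + Bs) = A + a + Bs := by abel
    rw [e1]
    linarith

private lemma main_pd (A B C : Matrix (Fin d) (Fin d) ℝ)
    (hA : A.PosDef) (hB : B.PosSemidef) (hC : C.PosSemidef) :
    (A + B).det + (A + C).det ≤ (A + B + C).det + A.det := by
  have h := lemC (fun i => fun j => hB.sqrt i j) Finset.univ A hA C hC
  rw [← psd_sum_rank1 hB] at h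
  exact h

end Aux

/-- Lemma 2.2 of Tie et al.: for positive semidefinite `A`, `B`, `C`,
`det (A + B + C) + det A ≥ det (A + B) + det (A + C)`. -/
theorem det_add_add_add_det_ge {d : ℕ}
    (A B C : Matrix (Fin d) (Fin d) ℝ)
    (hA : A.PosSemidef) (hB : B.PosSemidef) (hC : C.PosSemidef) :
    (A + B).det + (A + C).det ≤ (A + B + C).det + A.det := by
  set f : ℝ → ℝ := fun ε =>
    ((A + ε • 1 + B + C).det + (A + ε • 1).det)
      - ((A + ε • 1 + B).det + (A + ε • 1 + C).det) with hf
  have hcont : Continuous f := by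
    have h1 : Continuous fun ε : ℝ => A + ε • (1 : Matrix (Fin d) (Fin d) ℝ) :=
      continuous_const.add (continuous_id.smul continuous_const)
    exact (((h1.add continuous_const).add continuous_const).matrix_det.add
      h1.matrix_det).sub ((h1.add continuous_const).matrix_det.add
      (h1.add continuous_const).matrix_det)
  have hpos : ∀ ε : ℝ, 0 < ε → 0 ≤ f ε := by
    intro ε hε
    have hsm : (ε • (1 : Matrix (Fin d) (Fin d) ℝ)).PosDef := by
      refine Matrix.PosDef.of_dotProduct_mulVec_pos ?_ (fun x hx => ?_)
      · ext i j
        simp [conjTranspose_apply, Matrix.one_apply]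
        split <;> simp_all [eq_comm]
      · have h : (ε • (1 : Matrix (Fin d) (Fin d) ℝ)) *ᵥ x = ε • x := by
          ext i
          simp [mulVec, dotProduct, Matrix.one_apply, mul_ite, ite_mul, mul_one,
            mul_zero, zero_mul]
        rw [h]
        simp only [star_trivial, dotProduct_smul, smul_eq_mul]
        have h0 : 0 < x ⬝ᵥ x :=
          lt_of_le_of_ne (Finset.sum_nonneg fun i _ => mul_self_nonneg _)
            (fun hc => hx (dotProduct_self_eq_zero.mp hc.symm))
        positivity
    have hApd : (A + ε • (1 : Matrix (Fin d) (Fin d) ℝ)).PosDef := Matrix.PosDef.posSemidef_add hA hsm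
    have := main_pd (A + ε • 1) B C hApd hB hC
    simp only [hf]
    linarith
  have htend : Filter.Tendsto f (nhdsWithin 0 (Set.Ioi 0)) (nhds (f 0)) :=
    (hcont.tendsto 0).mono_left nhdsWithin_le_nhds
  have hge : 0 ≤ f 0 := by
    refine ge_of_tendsto htend ?_
    filter_upwards [self_mem_nhdsWithin] with x hx
    exact hpos x hx
  have hf0 : f 0 = ((A + B + C).det + A.det) - ((A + B).det + (A + C).det) := by
    simp [hf]
  rw [hf0] at hge
  linarith
end

section
/- Let Σ be a real symmetric positive definite d×d matrix, β ≥ 0, and θ̂, θ* ∈ ℝ^d with ‖θ̂ − θ*‖_Σ ≤ β. Let D ⊂ ℝ^d be a nonempty finite set and let x₀ ∈ D be a maximizer of x ↦ ⟨θ̂, x⟩ + β·√(xᵀΣ^{−1}x) over D. Then max_{x ∈ D} ⟨θ*, x⟩ − ⟨θ*, x₀⟩ ≤ 2β·√(x₀ᵀΣ^{−1}x₀). -/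
open Matrix

private lemma matCS {d : ℕ} (M : Matrix (Fin d) (Fin d) ℝ) (hM : M.PosSemidef)
    (x y : Fin d → ℝ) :
    (x ⬝ᵥ M *ᵥ y) ^ 2 ≤ (x ⬝ᵥ M *ᵥ x) * (y ⬝ᵥ M *ᵥ y) := by
  have hMt : Mᵀ = M := by
    rw [← Matrix.conjTranspose_eq_transpose_of_trivial]; exact hM.1
  have hsym : ∀ a b : Fin d → ℝ, a ⬝ᵥ M *ᵥ b = b ⬝ᵥ M *ᵥ a := by
    intro a b
    rw [dotProduct_mulVec, ← mulVec_transpose, hMt, dotProduct_comm]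
  have h : ∀ t : ℝ, 0 ≤ (y ⬝ᵥ M *ᵥ y) * (t * t) + (2 * (x ⬝ᵥ M *ᵥ y)) * t
      + (x ⬝ᵥ M *ᵥ x) := by
    intro t
    have h0 := hM.dotProduct_mulVec_nonneg (x + t • y)
    have hexp : (x + t • y) ⬝ᵥ M *ᵥ (x + t • y)
        = (y ⬝ᵥ M *ᵥ y) * (t * t) + (2 * (x ⬝ᵥ M *ᵥ y)) * t + (x ⬝ᵥ M *ᵥ x) := by
      simp only [mulVec_add, add_dotProduct, dotProduct_add, mulVec_smul,
        smul_dotProduct, dotProduct_smul, smul_eq_mul, hsym y x]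
      ring
    simpa only [star_trivial, hexp] using h0
  have hd := discrim_le_zero h
  unfold discrim at hd
  nlinarith [hd]

private lemma dot_le {d : ℕ} (Sig : Matrix (Fin d) (Fin d) ℝ) (hSig : Sig.PosDef)
    (β : ℝ) (hβ : 0 ≤ β) (v : Fin d → ℝ)
    (hconf : Real.sqrt (v ⬝ᵥ Sig *ᵥ v) ≤ β) (x : Fin d → ℝ) :
    |v ⬝ᵥ x| ≤ β * Real.sqrt (x ⬝ᵥ Sig⁻¹ *ᵥ x) := by
  have hinv : Sig⁻¹.PosDef := hSig.inv
  have hvx : v ⬝ᵥ x = v ⬝ᵥ Sig *ᵥ (Sig⁻¹ *ᵥ x) := by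
    rw [mulVec_mulVec, mul_nonsing_inv _ ((isUnit_iff_ne_zero.2 hSig.det_pos.ne')), one_mulVec]
  have hsymInv : (Sig⁻¹ *ᵥ x) ⬝ᵥ Sig *ᵥ (Sig⁻¹ *ᵥ x) = x ⬝ᵥ Sig⁻¹ *ᵥ x := by
    rw [mulVec_mulVec, mul_nonsing_inv _ ((isUnit_iff_ne_zero.2 hSig.det_pos.ne')),
      one_mulVec, dotProduct_comm]
  have hcs := matCS Sig hSig.posSemidef v (Sig⁻¹ *ᵥ x)
  rw [hsymInv] at hcs
  have h1 : 0 ≤ v ⬝ᵥ Sig *ᵥ v := by simpa only [star_trivial] using hSig.posSemidef.dotProduct_mulVec_nonneg v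
  have h2 : 0 ≤ x ⬝ᵥ Sig⁻¹ *ᵥ x := by simpa only [star_trivial] using hinv.posSemidef.dotProduct_mulVec_nonneg x
  have habs : |v ⬝ᵥ x| ≤ Real.sqrt (v ⬝ᵥ Sig *ᵥ v) * Real.sqrt (x ⬝ᵥ Sig⁻¹ *ᵥ x) := by
    rw [← Real.sqrt_mul h1, hvx, ← Real.sqrt_sq_eq_abs]
    exact Real.sqrt_le_sqrt hcs
  calc |v ⬝ᵥ x| ≤ Real.sqrt (v ⬝ᵥ Sig *ᵥ v) * Real.sqrt (x ⬝ᵥ Sig⁻¹ *ᵥ x) := habs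
    _ ≤ β * Real.sqrt (x ⬝ᵥ Sig⁻¹ *ᵥ x) :=
      mul_le_mul_of_nonneg_right hconf (Real.sqrt_nonneg _)

/-- Per-round regret of the optimistic action: under the confidence event, the
instantaneous regret of the UCB maximizer `x₀` is at most twice its bonus. -/
theorem ucb_per_round_regret {d : ℕ}
    (Sig : Matrix (Fin d) (Fin d) ℝ) (hSig : Sig.PosDef)
    (β : ℝ) (hβ : 0 ≤ β) (θhat θstar : Fin d → ℝ)
    (hconf : Real.sqrt ((θhat - θstar) ⬝ᵥ Sig *ᵥ (θhat - θstar)) ≤ β)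
    (D : Finset (Fin d → ℝ)) (hD : D.Nonempty)
    (x₀ : Fin d → ℝ) (hx₀ : x₀ ∈ D)
    (hmax : ∀ x ∈ D,
      θhat ⬝ᵥ x + β * Real.sqrt (x ⬝ᵥ Sig⁻¹ *ᵥ x)
        ≤ θhat ⬝ᵥ x₀ + β * Real.sqrt (x₀ ⬝ᵥ Sig⁻¹ *ᵥ x₀)) :
    ∀ x ∈ D, θstar ⬝ᵥ x - θstar ⬝ᵥ x₀ ≤ 2 * β * Real.sqrt (x₀ ⬝ᵥ Sig⁻¹ *ᵥ x₀) := by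
  intro x hx
  set v := θhat - θstar with hv
  have hvx := dot_le Sig hSig β hβ v hconf x
  have hvx₀ := dot_le Sig hSig β hβ v hconf x₀
  have hdecomp : ∀ y : Fin d → ℝ, θstar ⬝ᵥ y = θhat ⬝ᵥ y - v ⬝ᵥ y := by
    intro y; rw [hv, sub_dotProduct]; ring
  have hm := hmax x hx
  have h1 : -(β * Real.sqrt (x ⬝ᵥ Sig⁻¹ *ᵥ x)) ≤ v ⬝ᵥ x := neg_le_of_abs_le hvx
  have h2 : v ⬝ᵥ x₀ ≤ β * Real.sqrt (x₀ ⬝ᵥ Sig⁻¹ *ᵥ x₀) := le_of_abs_le hvx₀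
  rw [hdecomp x, hdecomp x₀]
  linarith
end

section
/- Let A and B be real symmetric positive definite d×d matrices with A ⪰ B. Then for every x ∈ ℝ^d: xᵀB^{−1}x ≤ (det(A)/det(B)) · xᵀA^{−1}x. -/
open Matrix

private lemma quadform_key {d : ℕ} {M : Matrix (Fin d) (Fin d) ℝ} (hM : M.IsHermitian)
    (h1 : ∀ i, 1 ≤ hM.eigenvalues i) : (M.det • M⁻¹ - 1).PosSemidef := by
  have hpos : ∀ i, (0:ℝ) < hM.eigenvalues i := fun i => lt_of_lt_of_le one_pos (h1 i)
  set U : Matrix (Fin d) (Fin d) ℝ := (hM.eigenvectorUnitary : Matrix (Fin d) (Fin d) ℝ) with hU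
  have hUU : star U * U = 1 := (Matrix.mem_unitaryGroup_iff').mp hM.eigenvectorUnitary.2
  have hUU' : U * star U = 1 := (Matrix.mem_unitaryGroup_iff).mp hM.eigenvectorUnitary.2
  have hspec : M = U * diagonal hM.eigenvalues * star U := by
    simpa using hM.spectral_theorem
  have hdet : M.det = ∏ i, hM.eigenvalues i := by simpa using hM.det_eq_prod_eigenvalues
  have hUinv : U⁻¹ = star U := inv_eq_left_inv hUU
  have hsUinv : (star U)⁻¹ = U := inv_eq_left_inv hUU'
  have hdinv : (diagonal hM.eigenvalues)⁻¹ = diagonal (fun i => (hM.eigenvalues i)⁻¹) := by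
    refine Matrix.inv_eq_right_inv ?_
    have hfun : (fun i => hM.eigenvalues i * (hM.eigenvalues i)⁻¹) = fun _ => (1:ℝ) :=
      funext fun i => mul_inv_cancel₀ (ne_of_gt (hpos i))
    rw [diagonal_mul_diagonal, hfun, diagonal_one]
  have hMinv : M⁻¹ = U * diagonal (fun i => (hM.eigenvalues i)⁻¹) * star U := by
    conv_lhs => rw [hspec]
    rw [Matrix.mul_inv_rev, Matrix.mul_inv_rev, hUinv, hsUinv, hdinv, Matrix.mul_assoc]
  have hd : (diagonal (fun i => M.det * (hM.eigenvalues i)⁻¹ - 1) : Matrix (Fin d) (Fin d) ℝ)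
      = M.det • diagonal (fun i => (hM.eigenvalues i)⁻¹) - 1 := by
    ext i j
    by_cases h : i = j <;> simp [diagonal, h, Matrix.one_apply]
  have hkey : M.det • M⁻¹ - 1 = U * diagonal (fun i => M.det * (hM.eigenvalues i)⁻¹ - 1) * star U := by
    rw [hd, Matrix.mul_sub, Matrix.mul_one, Matrix.sub_mul, hUU', hMinv, Matrix.mul_smul,
      Matrix.smul_mul]
  rw [hkey]
  have hdiag : (diagonal (fun i => M.det * (hM.eigenvalues i)⁻¹ - 1) : Matrix (Fin d) (Fin d) ℝ).PosSemidef := by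
    refine posSemidef_diagonal_iff.mpr fun i => ?_
    rw [sub_nonneg]
    have hile : hM.eigenvalues i ≤ M.det := by
      rw [hdet]
      calc hM.eigenvalues i = ∏ j, (if j = i then hM.eigenvalues i else 1) := by
            rw [Finset.prod_ite_eq' Finset.univ i (fun _ => hM.eigenvalues i)]
            simp
        _ ≤ ∏ j, hM.eigenvalues j := by
            refine Finset.prod_le_prod (fun j _ => ?_) (fun j _ => ?_)
            · by_cases h : j = i
              · simp only [h, if_pos]
                exact le_of_lt (hpos i)
              · simp [h]
            · by_cases h : j = i
              · simp [h]
              · simp only [h, if_neg, if_false]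
                exact h1 j
    have h2 : (1:ℝ) ≤ M.det / hM.eigenvalues i := (one_le_div (hpos i)).mpr hile
    simpa [div_eq_mul_inv] using h2
  have := hdiag.mul_mul_conjTranspose_same U
  simpa [Matrix.star_eq_conjTranspose] using this

private lemma quadform_eig_ge_one {d : ℕ} {M : Matrix (Fin d) (Fin d) ℝ} (hM : M.IsHermitian)
    (h1 : (M - 1).PosSemidef) (i : Fin d) : 1 ≤ hM.eigenvalues i := by
  have hv : dotProduct (star (⇑(hM.eigenvectorBasis i))) (⇑(hM.eigenvectorBasis i)) = 1 := by
    have h := orthonormal_iff_ite.mp hM.eigenvectorBasis.orthonormal (i := i) (j := i)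
    rw [EuclideanSpace.inner_eq_star_dotProduct] at h
    simpa using h
  have h2 := h1.dotProduct_mulVec_nonneg (⇑(hM.eigenvectorBasis i))
  rw [sub_mulVec, one_mulVec, dotProduct_sub, hv] at h2
  have := hM.eigenvalues_eq i
  simp only [RCLike.re_to_real] at this h2
  linarith [this, h2]

/-- If `A ⪰ B` with `A, B` positive definite, then
`xᵀ B⁻¹ x ≤ (det A / det B) * xᵀ A⁻¹ x` for every `x`. -/
theorem inv_quadratic_form_det_ratio {d : ℕ}
    (A B : Matrix (Fin d) (Fin d) ℝ)
    (hA : A.PosDef) (hB : B.PosDef) (hAB : (A - B).PosSemidef) :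
    ∀ x : Fin d → ℝ, x ⬝ᵥ B⁻¹ *ᵥ x ≤ (A.det / B.det) * (x ⬝ᵥ A⁻¹ *ᵥ x) := by
  intro x
  open scoped MatrixOrder in
  set S := CFC.sqrt B with hSdef
  have hSS : S * S = B := by
    open scoped MatrixOrder in exact CFC.sqrt_mul_sqrt_self B hB.posSemidef.nonneg
  have hSH : Sᴴ = S := by
    open scoped MatrixOrder in exact (CFC.sqrt_nonneg B).posSemidef.1
  have hdetB : B.det ≠ 0 := hB.det_pos.ne'
  have hdetS2 : S.det * S.det = B.det := by rw [← det_mul, hSS]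
  have hdetS : S.det ≠ 0 := fun h => hdetB (by rw [← hdetS2, h, mul_zero])
  have hSu : IsUnit S.det := isUnit_iff_ne_zero.mpr hdetS
  have hSl : S⁻¹ * S = 1 := nonsing_inv_mul S hSu
  have hSr : S * S⁻¹ = 1 := mul_nonsing_inv S hSu
  have hSinvH : (S⁻¹)ᴴ = S⁻¹ := by rw [conjTranspose_nonsing_inv, hSH]
  set M := S⁻¹ * A * S⁻¹ with hMdef
  have hMh : M.IsHermitian := by
    have := isHermitian_conjTranspose_mul_mul S⁻¹ hA.1
    rwa [hSinvH] at this
  have hB1 : S⁻¹ * B * S⁻¹ = 1 := by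
    rw [← hSS, ← Matrix.mul_assoc, Matrix.mul_assoc (S⁻¹ * S), hSl, hSr, Matrix.one_mul]
  have hM1 : (M - 1).PosSemidef := by
    have heq : S⁻¹ * (A - B) * S⁻¹ = M - 1 := by
      rw [Matrix.mul_sub, Matrix.sub_mul, hB1]
    have hp := hAB.conjTranspose_mul_mul_same S⁻¹
    rw [hSinvH] at hp
    rwa [heq] at hp
  have heig : ∀ i, 1 ≤ hMh.eigenvalues i := quadform_eig_ge_one hMh hM1
  have hk := quadform_key hMh heig
  -- det M = A.det / B.det
  have hdetSinv : S⁻¹.det = (S.det)⁻¹ := by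
    rw [det_nonsing_inv, Ring.inverse_eq_inv']
  have hdetM : M.det = A.det / B.det := by
    rw [hMdef, det_mul, det_mul, hdetSinv, ← hdetS2]
    field_simp
  -- A⁻¹ = S⁻¹ * M⁻¹ * S⁻¹
  have hAeq : A = S * M * S := by
    rw [hMdef, ← Matrix.mul_assoc, ← Matrix.mul_assoc, hSr, Matrix.one_mul,
      Matrix.mul_assoc, hSl, Matrix.mul_one]
  have hAinv : A⁻¹ = S⁻¹ * (M⁻¹ * S⁻¹) := by
    conv_lhs => rw [hAeq]
    rw [Matrix.mul_inv_rev, Matrix.mul_inv_rev]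
  have hBinv : B⁻¹ = S⁻¹ * S⁻¹ := by
    conv_lhs => rw [← hSS]
    rw [Matrix.mul_inv_rev]
  set y := S⁻¹ *ᵥ x with hy
  have hST : (S⁻¹)ᵀ = S⁻¹ := by
    rw [← conjTranspose_eq_transpose_of_trivial, hSinvH]
  have hxS : x ᵥ* S⁻¹ = y := by
    rw [hy, ← Matrix.mulVec_transpose, hST]
  have hqB : x ⬝ᵥ B⁻¹ *ᵥ x = y ⬝ᵥ y := by
    rw [hBinv, ← Matrix.mulVec_mulVec, dotProduct_mulVec, hxS]
  have hqA : x ⬝ᵥ A⁻¹ *ᵥ x = y ⬝ᵥ M⁻¹ *ᵥ y := by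
    rw [hAinv, ← Matrix.mulVec_mulVec, dotProduct_mulVec, hxS, ← Matrix.mulVec_mulVec]
  have hkey := hk.dotProduct_mulVec_nonneg y
  have hstar : star y = y := by
    funext i; simp
  rw [hstar, sub_mulVec, one_mulVec, dotProduct_sub, smul_mulVec, dotProduct_smul] at hkey
  rw [hqB, hqA, ← hdetM]
  have : (0:ℝ) ≤ M.det * (y ⬝ᵥ M⁻¹ *ᵥ y) - y ⬝ᵥ y := by simpa using hkey
  linarith
end
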